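/- Let n ≥ 1, p ∈ (0,1], and let Φ : (0,∞) → (0,∞) be continuous, strictly increasing, of upper type 1 with constant C₁ and of strictly lower type p (so that Φ is a bijection of (0,∞) onto (0,∞)); set ρ(t) := t^{-1}/Φ^{-1}(t^{-1}) and Φ(0) := 0. Then there exists C, depending only on n, p and C₁, such that for every cube Q = Q(x_Q, l) ⊂ ℝⁿ and every measurable a : ℝⁿ×(0,∞) → ℂ supported in the tent Q̂ with ∫∫_{Q̂} |a(y,t)|² dy dt/t ≤ |Q|^{-1} [ρ(|Q|)]^{-2}, one has ∫_{ℝⁿ} Φ(A(a)(x)) dx ≤ C. -/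

import Mathlib

open MeasureTheory ENNReal

/-- Canonical extension of `Φ : [0,∞) → [0,∞)` to `[0,∞]`, sending `∞` to `∞`. -/
noncomputable def extPhi (Φ : ℝ → ℝ) : ℝ≥0∞ → ℝ≥0∞ :=
  fun s => if s = ⊤ then ⊤ else ENNReal.ofReal (Φ s.toReal)

/-- The conical square functional (aperture 1):
`A(F)(x) = (∫∫_{‖y−x‖_∞ < t, t>0} |F(y,t)|² dy dt / t^{n+1})^{1/2}`,
where `ℝⁿ = Fin n → ℝ` carries the sup-norm. -/
noncomputable def conicalSq (n : ℕ) (F : (Fin n → ℝ) → ℝ → ℂ) (x : Fin n → ℝ) : ℝ≥0∞ :=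
  (∫⁻ q in {q : (Fin n → ℝ) × ℝ | 0 < q.2 ∧ dist q.1 x < q.2},
      (‖F q.1 q.2‖₊ : ℝ≥0∞) ^ 2 / ENNReal.ofReal (q.2 ^ (n + 1))) ^ (1/2 : ℝ)

/-- The tent over the cube `Q(x_Q, l)`:
`Q̂ = {(y,t) : t > 0, ‖y − x_Q‖_∞ < l/2 − t}`. -/
def tent (n : ℕ) (xQ : Fin n → ℝ) (l : ℝ) : Set ((Fin n → ℝ) × ℝ) :=
  {q | 0 < q.2 ∧ dist q.1 xQ < l / 2 - q.2}

/-- `ρ(t) := t⁻¹ / Φ⁻¹(t⁻¹)`, expressed via the inverse function `Ψ` of `Φ`. -/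
noncomputable def rhoOf (Ψ : ℝ → ℝ) (t : ℝ) : ℝ := t⁻¹ / Ψ t⁻¹

lemma auxArith (c : ℝ≥0∞) (t : ℝ) (ht : 0 < t) (n : ℕ) :
    c / ENNReal.ofReal (t ^ (n+1)) * ENNReal.ofReal ((2*t) ^ n) = 2^n * (c / ENNReal.ofReal t) := by
  set d : ℝ≥0∞ := ENNReal.ofReal t with hd
  have hd0 : d ≠ 0 := by simp [hd, ENNReal.ofReal_pos.2 ht, ne_of_gt]
  have hdt : d ≠ ⊤ := ENNReal.ofReal_ne_top
  have h1 : ENNReal.ofReal (t ^ (n+1)) = d ^ (n+1) := by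
    rw [ENNReal.ofReal_pow ht.le]
  have h2 : ENNReal.ofReal ((2*t) ^ n) = 2^n * d^n := by
    rw [ENNReal.ofReal_pow (by positivity), ENNReal.ofReal_mul (by norm_num),
      ENNReal.ofReal_ofNat, mul_pow]
  rw [h1, h2, div_eq_mul_inv, div_eq_mul_inv, pow_succ,
    ENNReal.mul_inv (Or.inl (pow_ne_zero _ hd0)) (Or.inl (pow_ne_top hdt))]
  have hcancel : (d ^ n)⁻¹ * d ^ n = 1 := ENNReal.inv_mul_cancel (pow_ne_zero _ hd0) (pow_ne_top hdt)
  calc c * ((d ^ n)⁻¹ * d⁻¹) * (2 ^ n * d ^ n)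
      = 2 ^ n * (c * d⁻¹) * ((d ^ n)⁻¹ * d ^ n) := by ring
    _ = 2 ^ n * (c * d⁻¹) := by rw [hcancel, mul_one]

lemma auxConeMeas (n : ℕ) (x : Fin n → ℝ) :
    MeasurableSet {q : (Fin n → ℝ) × ℝ | 0 < q.2 ∧ dist q.1 x < q.2} := by
  apply MeasurableSet.inter
  · exact measurableSet_lt measurable_const measurable_snd
  · exact measurableSet_lt ((measurable_fst.dist measurable_const)) measurable_snd

lemma auxSliceMeas (n : ℕ) (q : (Fin n → ℝ) × ℝ) :
    MeasurableSet {x : Fin n → ℝ | 0 < q.2 ∧ dist q.1 x < q.2} := by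
  by_cases h : 0 < q.2
  · have : {x : Fin n → ℝ | 0 < q.2 ∧ dist q.1 x < q.2}
        = {x : Fin n → ℝ | dist q.1 x < q.2} := by ext x; simp [h]
    rw [this]
    exact measurableSet_lt (measurable_const.dist measurable_id) measurable_const
  · have : {x : Fin n → ℝ | 0 < q.2 ∧ dist q.1 x < q.2} = ∅ := by ext x; simp [h]
    simp [this]

lemma auxTonelli (n : ℕ) (f : (Fin n → ℝ) × ℝ → ℝ≥0∞) (hf : Measurable f) :
    ∫⁻ x : Fin n → ℝ, ∫⁻ q in {q : (Fin n → ℝ) × ℝ | 0 < q.2 ∧ dist q.1 x < q.2}, f q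
      = ∫⁻ q : (Fin n → ℝ) × ℝ, f q * volume {x : Fin n → ℝ | 0 < q.2 ∧ dist q.1 x < q.2} := by
  have hT : MeasurableSet {p : (Fin n → ℝ) × ((Fin n → ℝ) × ℝ) |
      0 < p.2.2 ∧ dist p.2.1 p.1 < p.2.2} := by
    apply MeasurableSet.inter
    · exact measurableSet_lt measurable_const measurable_snd.snd
    · exact measurableSet_lt (measurable_snd.fst.dist measurable_fst) measurable_snd.snd
  calc ∫⁻ x : Fin n → ℝ, ∫⁻ q in {q : (Fin n → ℝ) × ℝ | 0 < q.2 ∧ dist q.1 x < q.2}, f q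
      = ∫⁻ x : Fin n → ℝ, ∫⁻ q : (Fin n → ℝ) × ℝ,
          ({q : (Fin n → ℝ) × ℝ | 0 < q.2 ∧ dist q.1 x < q.2}).indicator f q := by
        refine lintegral_congr fun x => ?_
        rw [lintegral_indicator (auxConeMeas n x)]
    _ = ∫⁻ q : (Fin n → ℝ) × ℝ, ∫⁻ x : Fin n → ℝ,
          ({q : (Fin n → ℝ) × ℝ | 0 < q.2 ∧ dist q.1 x < q.2}).indicator f q := by
        apply lintegral_lintegral_swap
        have : (Function.uncurry fun (x : Fin n → ℝ) (q : (Fin n → ℝ) × ℝ) =>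
            ({q : (Fin n → ℝ) × ℝ | 0 < q.2 ∧ dist q.1 x < q.2}).indicator f q)
            = ({p : (Fin n → ℝ) × ((Fin n → ℝ) × ℝ) |
                0 < p.2.2 ∧ dist p.2.1 p.1 < p.2.2}).indicator (fun p => f p.2) := by
          funext p
          simp only [Function.uncurry, Set.indicator_apply, Set.mem_setOf_eq]
        rw [this]
        exact ((hf.comp measurable_snd).indicator hT).aemeasurable
    _ = ∫⁻ q : (Fin n → ℝ) × ℝ, f q * volume {x : Fin n → ℝ | 0 < q.2 ∧ dist q.1 x < q.2} := by
        refine lintegral_congr fun q => ?_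
        have : (fun x : Fin n → ℝ =>
            ({q : (Fin n → ℝ) × ℝ | 0 < q.2 ∧ dist q.1 x < q.2}).indicator f q)
            = fun x : Fin n → ℝ =>
            ({x : Fin n → ℝ | 0 < q.2 ∧ dist q.1 x < q.2}).indicator (fun _ => f q) x := by
          funext x
          simp only [Set.indicator_apply, Set.mem_setOf_eq]
        rw [this, lintegral_indicator_const (auxSliceMeas n q)]

lemma auxMeasA (n : ℕ) (f : (Fin n → ℝ) × ℝ → ℝ≥0∞) (hf : Measurable f) :
    Measurable (fun x : Fin n → ℝ =>
      ∫⁻ q in {q : (Fin n → ℝ) × ℝ | 0 < q.2 ∧ dist q.1 x < q.2}, f q) := by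
  have hT : MeasurableSet {p : (Fin n → ℝ) × ((Fin n → ℝ) × ℝ) |
      0 < p.2.2 ∧ dist p.2.1 p.1 < p.2.2} := by
    apply MeasurableSet.inter
    · exact measurableSet_lt measurable_const measurable_snd.snd
    · exact measurableSet_lt (measurable_snd.fst.dist measurable_fst) measurable_snd.snd
  have heq : (fun x : Fin n → ℝ =>
      ∫⁻ q in {q : (Fin n → ℝ) × ℝ | 0 < q.2 ∧ dist q.1 x < q.2}, f q)
      = fun x : Fin n → ℝ => ∫⁻ q : (Fin n → ℝ) × ℝ,
        ({p : (Fin n → ℝ) × ((Fin n → ℝ) × ℝ) |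
          0 < p.2.2 ∧ dist p.2.1 p.1 < p.2.2}).indicator (fun p => f p.2) (x, q) := by
    funext x
    rw [← lintegral_indicator (auxConeMeas n x)]
    refine lintegral_congr fun q => ?_
    simp only [Set.indicator_apply, Set.mem_setOf_eq]
  rw [heq]
  exact Measurable.lintegral_prod_right' ((hf.comp measurable_snd).indicator hT)


/-- uniform bound `∫_{ℝⁿ} Φ(A(a)) dx ≤ C` over all `T_Φ(ℝⁿ)`-atoms `a`, where
`a` is supported in the tent of a cube `Q` of sidelength `l` (so `|Q| = lⁿ`), with
`∫∫_{Q̂} |a|² dy dt/t ≤ |Q|⁻¹ ρ(|Q|)⁻²`; `Ψ` is the inverse of `Φ`. The constant `C` depends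
only on `n`, `p` and `C₁`. -/
theorem stmt11 (n : ℕ) (hn : 1 ≤ n) (p C₁ : ℝ) (hp : p ∈ Set.Ioc (0:ℝ) 1) (hC₁ : 1 ≤ C₁) :
    ∃ C : ℝ, 0 < C ∧
    ∀ Φ Ψ : ℝ → ℝ, ContinuousOn Φ (Set.Ioi 0) → StrictMonoOn Φ (Set.Ioi 0) →
      (∀ t ∈ Set.Ioi (0:ℝ), 0 < Φ t) → Φ 0 = 0 →
      (∀ t ∈ Set.Ioi (0:ℝ), 0 < Ψ t) →
      (∀ t ∈ Set.Ioi (0:ℝ), Ψ (Φ t) = t) → (∀ t ∈ Set.Ioi (0:ℝ), Φ (Ψ t) = t) →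
      (∀ s ∈ Set.Ioi (0:ℝ), ∀ t : ℝ, 1 ≤ t → Φ (s * t) ≤ C₁ * t * Φ s) →
      (∀ s ∈ Set.Ioi (0:ℝ), ∀ t ∈ Set.Ioo (0:ℝ) 1, Φ (s * t) ≤ t ^ p * Φ s) →
    ∀ (xQ : Fin n → ℝ) (l : ℝ), 0 < l →
    ∀ a : (Fin n → ℝ) → ℝ → ℂ,
      Measurable (fun q : (Fin n → ℝ) × ℝ => a q.1 q.2) →
      (Function.support (fun q : (Fin n → ℝ) × ℝ => a q.1 q.2) ⊆ tent n xQ l) →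
      (∫⁻ q in tent n xQ l, (‖a q.1 q.2‖₊ : ℝ≥0∞) ^ 2 / ENNReal.ofReal q.2) ≤
        ENNReal.ofReal ((l ^ n)⁻¹ / rhoOf Ψ (l ^ n) ^ 2) →
      (∫⁻ x, extPhi Φ (conicalSq n a x)) ≤ ENNReal.ofReal C := by
  refine ⟨C₁ * (1 + 2 ^ n), by positivity, ?_⟩
  intro Φ Ψ hΦc hΦmono hΦpos hΦ0 hΨpos hΨΦ hΦΨ hup hlow xQ l hl a ha hsupp hsize
  have hL : (0:ℝ) < l ^ n := pow_pos hl n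
  set L : ℝ := l ^ n with hLdef
  have hLinv : (0:ℝ) < L⁻¹ := inv_pos.2 hL
  set u : ℝ := Ψ L⁻¹ with hudef
  have hu0 : 0 < u := hΨpos _ hLinv
  have hΦu : Φ u = L⁻¹ := hΦΨ _ hLinv
  -- rewrite the size bound
  have hsize' : (∫⁻ q in tent n xQ l, (‖a q.1 q.2‖₊ : ℝ≥0∞) ^ 2 / ENNReal.ofReal q.2)
      ≤ ENNReal.ofReal (L * u ^ 2) := by
    refine hsize.trans_eq ?_
    congr 1
    have hr : rhoOf Ψ L = L⁻¹ / u := by rw [rhoOf, hudef]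
    rw [hr]
    field_simp
  -- the integrand of the square function
  have hfmeas : Measurable (fun q : (Fin n → ℝ) × ℝ =>
      (‖a q.1 q.2‖₊ : ℝ≥0∞) ^ 2 / ENNReal.ofReal (q.2 ^ (n + 1))) := by
    apply Measurable.div
    · exact (ha.nnnorm.coe_nnreal_ennreal).pow_const 2
    · exact ENNReal.measurable_ofReal.comp (measurable_snd.pow_const (n+1))
  have hC₁0 : (0:ℝ) < C₁ := lt_of_lt_of_le one_pos hC₁
  have hc1 : (0:ℝ) < C₁ * L⁻¹ := mul_pos hC₁0 hLinv
  have hc2 : (0:ℝ) < C₁ * L⁻¹ / u := div_pos hc1 hu0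
  have hLu2 : (0:ℝ) ≤ L * u^2 := mul_nonneg hL.le (sq_nonneg u)
  have h2n : (0:ℝ) ≤ 2^n := by positivity
  have hprod : (0:ℝ) ≤ 2^n * (L * u^2) := mul_nonneg h2n hLu2
  have hAmeas : Measurable (conicalSq n a) := by
    have hrfl : conicalSq n a = fun x => (∫⁻ q in {q : (Fin n → ℝ) × ℝ | 0 < q.2 ∧ dist q.1 x < q.2},
        (‖a q.1 q.2‖₊ : ℝ≥0∞) ^ 2 / ENNReal.ofReal (q.2 ^ (n + 1))) ^ (1/2 : ℝ) := rfl
    rw [hrfl]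
    exact (auxMeasA n _ hfmeas).pow_const (1/2 : ℝ)
  -- square of the square function
  have hA2 : ∀ x, conicalSq n a x ^ 2
      = ∫⁻ q in {q : (Fin n → ℝ) × ℝ | 0 < q.2 ∧ dist q.1 x < q.2},
          (‖a q.1 q.2‖₊ : ℝ≥0∞) ^ 2 / ENNReal.ofReal (q.2 ^ (n + 1)) := by
    intro x
    rw [conicalSq, ← ENNReal.rpow_natCast _ 2, ← ENNReal.rpow_mul]
    norm_num
  -- the tent is measurable
  have htentmeas : MeasurableSet (tent n xQ l) := by
    apply MeasurableSet.inter
    · exact measurableSet_lt measurable_const measurable_snd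
    · exact measurableSet_lt (measurable_fst.dist measurable_const)
        (measurable_const.sub measurable_snd)
  -- key L² bound via Tonelli
  have hkey : ∫⁻ x, conicalSq n a x ^ 2 ≤ ENNReal.ofReal (2^n * (L * u^2)) := by
    have h1 : ∫⁻ x, conicalSq n a x ^ 2
        = ∫⁻ q : (Fin n → ℝ) × ℝ,
            ((‖a q.1 q.2‖₊ : ℝ≥0∞) ^ 2 / ENNReal.ofReal (q.2 ^ (n + 1)))
              * volume {x : Fin n → ℝ | 0 < q.2 ∧ dist q.1 x < q.2} := by
      rw [lintegral_congr hA2]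
      exact auxTonelli n _ hfmeas
    have h2 : ∫⁻ q : (Fin n → ℝ) × ℝ,
            ((‖a q.1 q.2‖₊ : ℝ≥0∞) ^ 2 / ENNReal.ofReal (q.2 ^ (n + 1)))
              * volume {x : Fin n → ℝ | 0 < q.2 ∧ dist q.1 x < q.2}
        = ∫⁻ q in tent n xQ l,
            ((‖a q.1 q.2‖₊ : ℝ≥0∞) ^ 2 / ENNReal.ofReal (q.2 ^ (n + 1)))
              * volume {x : Fin n → ℝ | 0 < q.2 ∧ dist q.1 x < q.2} := by
      rw [← lintegral_indicator htentmeas]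
      refine lintegral_congr fun q => ?_
      by_cases hq : q ∈ tent n xQ l
      · rw [Set.indicator_of_mem hq]
      · rw [Set.indicator_of_notMem hq]
        have haq : a q.1 q.2 = 0 := by
          by_contra hne
          exact hq (hsupp (Function.mem_support.2 hne))
        simp [haq]
    have h3 : ∫⁻ q in tent n xQ l,
            ((‖a q.1 q.2‖₊ : ℝ≥0∞) ^ 2 / ENNReal.ofReal (q.2 ^ (n + 1)))
              * volume {x : Fin n → ℝ | 0 < q.2 ∧ dist q.1 x < q.2}
        = ∫⁻ q in tent n xQ l,
            2^n * ((‖a q.1 q.2‖₊ : ℝ≥0∞) ^ 2 / ENNReal.ofReal q.2) := by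
      refine setLIntegral_congr_fun htentmeas (fun q hq => ?_)
      have hq2 : 0 < q.2 := hq.1
      have hball : {x : Fin n → ℝ | 0 < q.2 ∧ dist q.1 x < q.2} = Metric.ball q.1 q.2 := by
        ext x; simp [Metric.mem_ball, dist_comm, hq2]
      rw [hball, Real.volume_pi_ball _ hq2, Fintype.card_fin]
      exact auxArith _ q.2 hq2 n
    rw [h1, h2, h3, lintegral_const_mul' _ _ (pow_ne_top (by norm_num))]
    calc (2:ℝ≥0∞)^n * ∫⁻ q in tent n xQ l, (‖a q.1 q.2‖₊ : ℝ≥0∞) ^ 2 / ENNReal.ofReal q.2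
        ≤ 2^n * ENNReal.ofReal (L * u^2) := mul_le_mul_right hsize' _
      _ = ENNReal.ofReal (2^n * (L * u^2)) := by
          rw [ENNReal.ofReal_mul h2n, ENNReal.ofReal_pow (by norm_num : (0:ℝ) ≤ 2),
            ENNReal.ofReal_ofNat]
  -- support of the square function
  have hvolQ : volume (Metric.closedBall xQ (l/2)) = ENNReal.ofReal L := by
    rw [Real.volume_pi_closedBall _ (by linarith : (0:ℝ) ≤ l/2), Fintype.card_fin]
    have : 2 * (l/2) = l := by ring
    rw [this]
  have hAzero : ∀ x, x ∉ Metric.closedBall xQ (l/2) → conicalSq n a x = 0 := by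
    intro x hx
    have hx' : l/2 < dist x xQ := by
      simpa [Metric.mem_closedBall, not_le] using hx
    have hzero : ∀ q ∈ {q : (Fin n → ℝ) × ℝ | 0 < q.2 ∧ dist q.1 x < q.2},
        (‖a q.1 q.2‖₊ : ℝ≥0∞) ^ 2 / ENNReal.ofReal (q.2 ^ (n + 1)) = 0 := by
      intro q hq
      have haq : a q.1 q.2 = 0 := by
        by_contra hne
        have hqt : q ∈ tent n xQ l := hsupp (Function.mem_support.2 hne)
        have ht1 : dist x xQ ≤ dist x q.1 + dist q.1 xQ := dist_triangle _ _ _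
        have ht2 : dist x q.1 < q.2 := by rw [dist_comm]; exact hq.2
        have ht3 : dist q.1 xQ < l/2 - q.2 := hqt.2
        linarith
      simp [haq]
    rw [conicalSq, setLIntegral_congr_fun (auxConeMeas n x) hzero,
      lintegral_zero, ENNReal.zero_rpow_of_pos (by norm_num)]
  have hext0 : extPhi Φ 0 = 0 := by simp [extPhi, hΦ0]
  -- pointwise bound for Φ
  have hpt : ∀ s : ℝ≥0∞, extPhi Φ s
      ≤ ENNReal.ofReal (C₁ * L⁻¹) + ENNReal.ofReal (C₁ * L⁻¹ / u) * s := by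
    intro s
    by_cases hs : s = ⊤
    · subst hs
      have hne : ENNReal.ofReal (C₁ * L⁻¹ / u) ≠ 0 :=
        (ENNReal.ofReal_pos.2 hc2).ne'
      simp [extPhi, ENNReal.mul_top hne]
    · rw [show extPhi Φ s = ENNReal.ofReal (Φ s.toReal) from if_neg hs]
      rcases eq_or_lt_of_le (ENNReal.toReal_nonneg : (0:ℝ) ≤ s.toReal) with h0 | h0
      · rw [← h0, hΦ0]; simp
      · rcases le_or_gt s.toReal u with hru | hru
        · refine le_trans ?_ le_self_add
          apply ENNReal.ofReal_le_ofReal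
          have h1 : Φ s.toReal ≤ Φ u :=
            hΦmono.monotoneOn (Set.mem_Ioi.2 h0) (Set.mem_Ioi.2 hu0) hru
          nlinarith
        · have hdiv : 1 ≤ s.toReal / u := (one_le_div hu0).2 hru.le
          have h2 := hup u (Set.mem_Ioi.2 hu0) (s.toReal/u) hdiv
          have h3 : u * (s.toReal/u) = s.toReal := by field_simp
          rw [h3, hΦu] at h2
          have h4 : ENNReal.ofReal (Φ s.toReal)
              ≤ ENNReal.ofReal (C₁ * L⁻¹ / u * s.toReal) :=
            ENNReal.ofReal_le_ofReal (h2.trans_eq (by ring))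
          refine h4.trans (le_trans ?_ le_add_self)
          rw [ENNReal.ofReal_mul hc2.le, ENNReal.ofReal_toReal hs]
  -- restrict to the cube
  have hQ1 : ∫⁻ x, extPhi Φ (conicalSq n a x)
      = ∫⁻ x in Metric.closedBall xQ (l/2), extPhi Φ (conicalSq n a x) := by
    rw [← lintegral_indicator measurableSet_closedBall]
    refine lintegral_congr fun x => ?_
    by_cases hx : x ∈ Metric.closedBall xQ (l/2)
    · rw [Set.indicator_of_mem hx]
    · rw [Set.indicator_of_notMem hx, hAzero x hx, hext0]
  -- Cauchy-Schwarz
  have hCS : ∫⁻ x in Metric.closedBall xQ (l/2), conicalSq n a x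
      ≤ (∫⁻ x in Metric.closedBall xQ (l/2), conicalSq n a x ^ 2) ^ (1/2:ℝ)
        * (volume (Metric.closedBall xQ (l/2))) ^ (1/2:ℝ) := by
    have hconj : Real.HolderConjugate 2 2 := Real.HolderConjugate.two_two
    have h := ENNReal.lintegral_mul_le_Lp_mul_Lq (volume.restrict (Metric.closedBall xQ (l/2)))
      hconj hAmeas.aemeasurable (aemeasurable_const (b := (1:ℝ≥0∞)))
    have h2 : ∀ z : ℝ≥0∞, z ^ (2:ℝ) = z ^ (2:ℕ) := fun z => by
      rw [← ENNReal.rpow_natCast]; norm_num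
    simp only [Pi.mul_apply, mul_one, ENNReal.one_rpow, h2, one_pow, lintegral_one,
      Measure.restrict_apply_univ] at h
    exact h
  -- real-number arithmetic for the final bound
  have hsqrt : Real.sqrt (2^n * (L * u^2)) * Real.sqrt L = Real.sqrt (2^n) * (L * u) := by
    rw [← Real.sqrt_mul hprod]
    have he : (2:ℝ)^n * (L * u^2) * L = 2^n * (L*u)^2 := by ring
    rw [he, Real.sqrt_mul h2n, Real.sqrt_sq (mul_nonneg hL.le hu0.le)]
  have hs2n : Real.sqrt ((2:ℝ)^n) ≤ 2^n := by
    have h1 : (1:ℝ) ≤ 2^n := one_le_pow₀ (by norm_num)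
    calc Real.sqrt ((2:ℝ)^n) ≤ Real.sqrt (((2:ℝ)^n)^2) := Real.sqrt_le_sqrt (by nlinarith)
      _ = 2^n := Real.sqrt_sq (by positivity)
  have hreal : C₁ * L⁻¹ * L + C₁ * L⁻¹ / u * (Real.sqrt (2^n * (L * u^2)) * Real.sqrt L)
      ≤ C₁ * (1 + 2^n) := by
    rw [hsqrt]
    have hLne : L ≠ 0 := hL.ne'
    have hune : u ≠ 0 := hu0.ne'
    have heq : C₁ * L⁻¹ * L + C₁ * L⁻¹ / u * (Real.sqrt (2^n) * (L * u))
        = C₁ + C₁ * Real.sqrt (2^n) := by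
      field_simp
    rw [heq]
    nlinarith [Real.sqrt_nonneg ((2:ℝ)^n)]
  -- put everything together
  have hrpow1 : (ENNReal.ofReal (2^n * (L * u^2))) ^ (1/2:ℝ)
      = ENNReal.ofReal (Real.sqrt (2^n * (L * u^2))) := by
    rw [ENNReal.ofReal_rpow_of_nonneg hprod (by norm_num), Real.sqrt_eq_rpow]
  have hrpow2 : (ENNReal.ofReal L) ^ (1/2:ℝ) = ENNReal.ofReal (Real.sqrt L) := by
    rw [ENNReal.ofReal_rpow_of_nonneg hL.le (by norm_num), Real.sqrt_eq_rpow]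
  calc ∫⁻ x, extPhi Φ (conicalSq n a x)
      = ∫⁻ x in Metric.closedBall xQ (l/2), extPhi Φ (conicalSq n a x) := hQ1
    _ ≤ ∫⁻ x in Metric.closedBall xQ (l/2),
          (ENNReal.ofReal (C₁ * L⁻¹) + ENNReal.ofReal (C₁ * L⁻¹ / u) * conicalSq n a x) :=
        lintegral_mono fun x => hpt _
    _ = ENNReal.ofReal (C₁ * L⁻¹) * volume (Metric.closedBall xQ (l/2))
          + ENNReal.ofReal (C₁ * L⁻¹ / u) * ∫⁻ x in Metric.closedBall xQ (l/2), conicalSq n a x := by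
        rw [lintegral_add_left measurable_const, lintegral_const,
          Measure.restrict_apply_univ, lintegral_const_mul' _ _ ENNReal.ofReal_ne_top]
    _ ≤ ENNReal.ofReal (C₁ * L⁻¹) * ENNReal.ofReal L
          + ENNReal.ofReal (C₁ * L⁻¹ / u) *
            ((ENNReal.ofReal (2^n * (L * u^2))) ^ (1/2:ℝ) * (ENNReal.ofReal L) ^ (1/2:ℝ)) := by
        refine add_le_add (by rw [hvolQ]) (mul_le_mul_right ?_ _)
        refine hCS.trans ?_
        rw [hvolQ]
        refine mul_le_mul_left (ENNReal.rpow_le_rpow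
          ((setLIntegral_le_lintegral _ _).trans hkey) (by norm_num)) _
    _ = ENNReal.ofReal (C₁ * L⁻¹ * L
          + C₁ * L⁻¹ / u * (Real.sqrt (2^n * (L * u^2)) * Real.sqrt L)) := by
        rw [hrpow1, hrpow2, ← ENNReal.ofReal_mul (Real.sqrt_nonneg _),
          ← ENNReal.ofReal_mul hc2.le, ← ENNReal.ofReal_mul hc1.le,
          ← ENNReal.ofReal_add (mul_nonneg hc1.le hL.le)
            (mul_nonneg hc2.le (mul_nonneg (Real.sqrt_nonneg _) (Real.sqrt_nonneg _)))]
    _ ≤ ENNReal.ofReal (C₁ * (1 + 2^n)) := ENNReal.ofReal_le_ofReal hreal
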